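/- Let σ be an n-dimensional simplicial rational polyhedral cone in ℝⁿ (with lattice N = ℤⁿ). Then there exists a ℤ-basis v₁,…,vₙ of ℤⁿ such that every vᵢ lies in σ. -/

import Mathlib

lemma elem_basis {n : ℕ} (b : Module.Basis (Fin n) ℤ (Fin n → ℤ)) (i₀ : Fin n)
    (m : Fin n → ℤ) (hm : m i₀ = 0) :
    ∃ b' : Module.Basis (Fin n) ℤ (Fin n → ℤ), ∀ i, b' i = b i + m i • b i₀ := by
  let f := b.constr ℤ (fun i => b i + m i • b i₀)
  let g := b.constr ℤ (fun i => b i - m i • b i₀)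
  have hfb : ∀ i, f (b i) = b i + m i • b i₀ := fun i => b.constr_basis ℤ _ i
  have hgb : ∀ i, g (b i) = b i - m i • b i₀ := fun i => b.constr_basis ℤ _ i
  have hfg : f ∘ₗ g = LinearMap.id := b.ext fun i => by
    rw [LinearMap.comp_apply, hgb i, map_sub, map_zsmul, hfb i, hfb i₀, hm,
      zero_smul, add_zero, LinearMap.id_apply]
    abel
  have hgf : g ∘ₗ f = LinearMap.id := b.ext fun i => by
    rw [LinearMap.comp_apply, hfb i, map_add, map_zsmul, hgb i, hgb i₀, hm,
      zero_smul, sub_zero, LinearMap.id_apply]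
    abel
  let e : (Fin n → ℤ) ≃ₗ[ℤ] (Fin n → ℤ) := LinearEquiv.ofLinear f g hfg hgf
  refine ⟨b.map e, fun i => ?_⟩
  show e (b i) = _
  exact hfb i

lemma exists_basis_mem {n : ℕ} (u : Fin n → ℤ) (h0 : u ≠ 0)
    (hu : ∀ (a : ℤ) (x : Fin n → ℤ), u = a • x → IsUnit a) :
    ∃ (b : Module.Basis (Fin n) ℤ (Fin n → ℤ)) (i₀ : Fin n), b i₀ = u := by
  obtain ⟨m, snf⟩ :=
    Submodule.smithNormalForm (Pi.basisFun ℤ (Fin n)) (Submodule.span ℤ {u})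
  have hli : LinearIndependent ℤ (fun _ : Fin 1 => u) := LinearIndependent.of_subsingleton (0 : Fin 1) h0
  let bu : Module.Basis (Fin 1) ℤ (Submodule.span ℤ {u}) :=
    (Module.Basis.span hli).map (LinearEquiv.ofEq _ _ (by rw [Set.range_const]))
  have hm1 : m = 1 := by simpa using Fintype.card_congr (snf.bN.indexEquiv bu)
  subst hm1
  set uN : Submodule.span ℤ {u} := ⟨u, Submodule.mem_span_singleton_self u⟩ with huN
  have hsum := snf.bN.sum_repr uN
  rw [Fin.sum_univ_one] at hsum
  set c := snf.bN.repr uN 0 with hc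
  have hcoe : u = (c * snf.a 0) • snf.bM (snf.f 0) := by
    have := congrArg Subtype.val hsum
    rw [Submodule.coe_smul] at this
    rw [mul_smul c (snf.a 0), ← snf.snf 0]
    exact this.symm
  obtain ⟨ε, hε⟩ := hu _ _ hcoe
  refine ⟨snf.bM.unitsSMul (fun i => if i = snf.f 0 then ε else 1), snf.f 0, ?_⟩
  rw [Module.Basis.unitsSMul_apply, if_pos rfl, Units.smul_def, hε, ← hcoe]

theorem stmt0 (n : ℕ) (v : Fin n → (Fin n → ℤ))
    (hv : LinearIndependent ℝ (fun i => fun j => (v i j : ℝ))) :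
    ∃ b : Module.Basis (Fin n) ℤ (Fin n → ℤ),
      ∀ i : Fin n, ∃ c : Fin n → ℝ, (∀ k, 0 ≤ c k) ∧
        (fun j => ((b i) j : ℝ)) = ∑ k, c k • (fun j => (v k j : ℝ)) := by
  rcases Nat.eq_zero_or_pos n with rfl | hn
  · exact ⟨Pi.basisFun ℤ (Fin 0), fun i => i.elim0⟩
  have hne : Nonempty (Fin n) := ⟨⟨0, hn⟩⟩
  set vR : Fin n → (Fin n → ℝ) := fun i => fun j => (v i j : ℝ) with hvR
  set castR : (Fin n → ℤ) → (Fin n → ℝ) := fun x j => (x j : ℝ) with hcastR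
  -- the sum of the generators
  set s : Fin n → ℤ := ∑ k, v k with hsdef
  have hs : s ≠ 0 := by
    intro h
    have h2 : ∑ k, (1:ℝ) • vR k = 0 := by
      funext j
      have h3 : (∑ k, v k j) = 0 := by
        have := congrFun h j
        simpa [hsdef, Finset.sum_apply] using this
      have h4 : ((∑ k, v k j : ℤ) : ℝ) = 0 := by exact_mod_cast congrArg (Int.cast : ℤ → ℝ) h3
      push_cast at h4
      simpa [Finset.sum_apply] using h4
    exact one_ne_zero (Fintype.linearIndependent_iff.mp hv (fun _ => (1:ℝ)) h2 ⟨0, hn⟩)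
  set g : ℤ := Finset.gcd Finset.univ s with hgdef
  have hg0 : g ≠ 0 := by
    intro h
    exact hs (funext fun j => Finset.gcd_eq_zero_iff.mp h j (Finset.mem_univ j))
  have hgnn : 0 ≤ g := by
    have habs : |g| = g := by
      rw [hgdef, Int.abs_eq_normalize]
      exact Finset.normalize_gcd
    rw [← habs]; exact abs_nonneg _
  have hgpos : (0:ℝ) < (g:ℝ) := by
    exact_mod_cast lt_of_le_of_ne hgnn (Ne.symm hg0)
  set u : Fin n → ℤ := fun j => s j / g with hudef
  have hgu : ∀ j, g * u j = s j := fun j =>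
    Int.mul_ediv_cancel' (Finset.gcd_dvd (Finset.mem_univ j))
  have h0 : u ≠ 0 := by
    intro h
    apply hs
    funext j
    rw [← hgu j, h]
    simp
  have hprim : ∀ (a : ℤ) (x : Fin n → ℤ), u = a • x → IsUnit a := by
    intro a x h
    have hd : a * g ∣ g := by
      apply Finset.dvd_gcd
      intro j _
      refine ⟨x j, ?_⟩
      rw [← hgu j, congrFun h j]
      simp [Pi.smul_apply, smul_eq_mul]; ring
    obtain ⟨t, ht⟩ := hd
    have : g * 1 = g * (a * t) := by linear_combination ht
    exact IsUnit.of_mul_eq_one t (mul_left_cancel₀ hg0 this).symm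
  obtain ⟨b, i₀, hb⟩ := exists_basis_mem u h0 hprim
  -- a real basis from v
  have hcard : Fintype.card (Fin n) = Module.finrank ℝ (Fin n → ℝ) := by simp
  set B : Module.Basis (Fin n) ℝ (Fin n → ℝ) := basisOfLinearIndependentOfCardEqFinrank hv hcard
    with hBdef
  have hB : ∀ i, B i = vR i := fun i =>
    congrFun (coe_basisOfLinearIndependentOfCardEqFinrank hv hcard) i
  have hrepr : ∀ x : Fin n → ℝ, x = ∑ k, B.repr x k • vR k := by
    intro x
    conv_lhs => rw [← B.sum_repr x]
    exact Finset.sum_congr rfl fun k _ => by rw [hB]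
  -- real form of u
  have hu2 : castR u = ∑ k, (g:ℝ)⁻¹ • vR k := by
    funext j
    have := hgu j
    have hsj : (s j : ℝ) = ∑ k, (v k j : ℝ) := by
      simp [hsdef, Finset.sum_apply]
    have : ((g : ℝ)) * (u j : ℝ) = (s j : ℝ) := by exact_mod_cast congrArg Int.cast this
    simp only [Finset.sum_apply, Pi.smul_apply, smul_eq_mul, hcastR]
    rw [← Finset.mul_sum, ← hsj, ← this]
    field_simp
  set R : Fin n → Fin n → ℝ := fun i => B.repr (castR (b i)) with hR
  set m : Fin n → ℤ := fun i =>
    if i = i₀ then 0 else ∑ k, max 0 ⌈-(g:ℝ) * R i k⌉ with hmdef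
  obtain ⟨b', hb'⟩ := elem_basis b i₀ m (by simp [hmdef])
  refine ⟨b', fun i => ?_⟩
  refine ⟨fun k => R i k + (m i : ℝ) * (g:ℝ)⁻¹, ?_, ?_⟩
  · intro k
    show 0 ≤ R i k + (m i : ℝ) * (g:ℝ)⁻¹
    by_cases hi : i = i₀
    · have hRv : R i k = (g:ℝ)⁻¹ := by
        have hcu : castR (b i₀) = ∑ l, (g:ℝ)⁻¹ • B l := by
          rw [hb, hu2]
          exact Finset.sum_congr rfl fun l _ => by rw [hB]
        have h5 : B.repr (castR (b i₀)) k = (g:ℝ)⁻¹ := by rw [hcu, B.repr_sum_self]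
        rw [hi]; exact h5
      have hmz : m i = 0 := by rw [hmdef]; simp [hi]
      rw [hRv, hmz]
      simp
      positivity
    · have hm2 : ⌈-(g:ℝ) * R i k⌉ ≤ m i := by
        rw [hmdef]
        simp only [if_neg hi]
        calc ⌈-(g:ℝ) * R i k⌉ ≤ max 0 ⌈-(g:ℝ) * R i k⌉ := le_max_right _ _
        _ ≤ ∑ l, max 0 ⌈-(g:ℝ) * R i l⌉ :=
          Finset.single_le_sum (f := fun l => 0 ⊔ ⌈-(g:ℝ) * R i l⌉)
            (fun l _ => le_max_left _ _) (Finset.mem_univ k)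
      have h1 : -(g:ℝ) * R i k ≤ (m i : ℝ) :=
        (Int.le_ceil _).trans (by exact_mod_cast hm2)
      have h2 := mul_le_mul_of_nonneg_right h1 (le_of_lt (inv_pos.mpr hgpos))
      have h4 : -R i k = (-(g:ℝ) * R i k) * (g:ℝ)⁻¹ := by field_simp
      linarith [h4 ▸ h2]
  · have hcast : (fun j => ((b' i) j : ℝ)) = castR (b i) + (m i : ℝ) • castR u := by
      funext j
      have : (b' i) j = (b i) j + m i * u j := by
        rw [hb' i, hb]
        simp [Pi.smul_apply, smul_eq_mul]
      rw [this]
      push_cast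
      simp [hcastR]
    rw [hcast, hrepr (castR (b i)), hu2]
    rw [Finset.smul_sum, ← Finset.sum_add_distrib]
    refine Finset.sum_congr rfl fun k _ => ?_
    rw [smul_smul, ← add_smul]
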